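/- Let d ≥ 1, T ≥ 1, let x_1, …, x_T ∈ ℝ^d be vectors with ‖x_t‖₂ ≤ 1 for all t ∈ [T], and let λ > 0. Define H_T = { t ∈ [T] : ‖x_t‖²_{V_{t-1}(λ)⁻¹} > 1 }. Then |H_T| ≤ (d / log 2) · log( 1 + |H_T| / (λ·d) ). -/

import Mathlib

open Matrix

variable {d : ℕ}

lemma dot_vecMulVec (v y : Fin d → ℝ) : y ⬝ᵥ (vecMulVec v v) *ᵥ y = (v ⬝ᵥ y)^2 := by
  rw [sq, dotProduct, dotProduct, Finset.sum_mul_sum]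
  simp only [dotProduct, mulVec, vecMulVec_apply, dotProduct, Finset.mul_sum]
  refine Finset.sum_congr rfl fun i _ => Finset.sum_congr rfl fun j _ => by ring

lemma psd_vecMulVec (v : Fin d → ℝ) : (vecMulVec v v).PosSemidef := by
  refine posSemidef_iff_dotProduct_mulVec.mpr ⟨?_, ?_⟩
  · ext i j
    simp [conjTranspose_apply, vecMulVec_apply, mul_comm]
  · intro y
    rw [star_trivial, dot_vecMulVec]
    positivity

lemma posDef_M {lam : ℝ} (hlam : 0 < lam) (x : ℕ → Fin d → ℝ) (S : Finset ℕ) :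
    (lam • (1 : Matrix (Fin d) (Fin d) ℝ) + ∑ s ∈ S, vecMulVec (x s) (x s)).PosDef := by
  apply Matrix.PosDef.add_posSemidef
  · rw [Matrix.smul_one_eq_diagonal]
    exact Matrix.PosDef.diagonal fun _ => hlam
  · exact Finset.sum_induction _ _ (fun _ _ h h' => h.add h') (Matrix.PosSemidef.zero)
      (fun s _ => psd_vecMulVec (x s))

lemma symm_dot {A : Matrix (Fin d) (Fin d) ℝ} (hA : A.IsHermitian) (a b : Fin d → ℝ) :
    b ⬝ᵥ A *ᵥ a = a ⬝ᵥ A *ᵥ b := by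
  have ht : Aᵀ = A := by
    have := hA; rwa [Matrix.IsHermitian, conjTranspose_eq_transpose_of_trivial] at this
  conv_lhs => rw [dotProduct_comm, ← ht, mulVec_transpose, ← dotProduct_mulVec]

lemma cs_psd {A : Matrix (Fin d) (Fin d) ℝ} (hA : A.PosSemidef) (a b : Fin d → ℝ) :
    (a ⬝ᵥ A *ᵥ b)^2 ≤ (a ⬝ᵥ A *ᵥ a) * (b ⬝ᵥ A *ᵥ b) := by
  have key : ∀ t : ℝ, 0 ≤ (b ⬝ᵥ A *ᵥ b) * (t * t) + (2 * (a ⬝ᵥ A *ᵥ b)) * t + (a ⬝ᵥ A *ᵥ a) := by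
    intro t
    have h0 := hA.dotProduct_mulVec_nonneg (a + t • b)
    rw [star_trivial] at h0
    have expand : (a + t • b) ⬝ᵥ A *ᵥ (a + t • b)
        = (b ⬝ᵥ A *ᵥ b) * (t * t) + (2 * (a ⬝ᵥ A *ᵥ b)) * t + (a ⬝ᵥ A *ᵥ a) := by
      rw [add_dotProduct, mulVec_add, dotProduct_add, dotProduct_add,
        smul_dotProduct, mulVec_smul, dotProduct_smul, dotProduct_smul, smul_dotProduct,
        symm_dot hA.1 a b]
      simp only [smul_eq_mul]
      ring
    linarith [expand ▸ h0]
  have hd := discrim_le_zero key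
  rw [discrim] at hd
  nlinarith [hd]

lemma inv_dot_antitone {A B : Matrix (Fin d) (Fin d) ℝ} (hA : A.PosDef) (hB : B.PosDef)
    (hAB : (B - A).PosSemidef) (v : Fin d → ℝ) :
    v ⬝ᵥ B⁻¹ *ᵥ v ≤ v ⬝ᵥ A⁻¹ *ᵥ v := by
  set u := B⁻¹ *ᵥ v with hu
  set w := A⁻¹ *ᵥ v with hw
  have hAv : A *ᵥ w = v := by
    rw [hw, mulVec_mulVec, Matrix.mul_nonsing_inv _ hA.det_pos.ne'.isUnit, one_mulVec]
  have hBv : B *ᵥ u = v := by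
    rw [hu, mulVec_mulVec, Matrix.mul_nonsing_inv _ hB.det_pos.ne'.isUnit, one_mulVec]
  set α := v ⬝ᵥ A⁻¹ *ᵥ v with hα
  set β := v ⬝ᵥ B⁻¹ *ᵥ v with hβ
  have hα0 : 0 ≤ α := by
    have := hA.inv.posSemidef.dotProduct_mulVec_nonneg v; rwa [star_trivial] at this
  have huv : u ⬝ᵥ v = β := by
    rw [hβ, dotProduct_comm]
  have huAw : u ⬝ᵥ A *ᵥ w = β := by rw [hAv, huv]
  have huBu : u ⬝ᵥ B *ᵥ u = β := by rw [hBv, huv]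
  have hwAw : w ⬝ᵥ A *ᵥ w = α := by
    rw [hAv, hα, hw, dotProduct_comm]
  have hcs := cs_psd hA.posSemidef u w
  rw [huAw, hwAw] at hcs
  have huAu : u ⬝ᵥ A *ᵥ u ≤ β := by
    have h := hAB.dotProduct_mulVec_nonneg u
    rw [star_trivial, sub_mulVec, dotProduct_sub, huBu] at h
    linarith
  have huAu0 : 0 ≤ u ⬝ᵥ A *ᵥ u := by
    have := hA.posSemidef.dotProduct_mulVec_nonneg u; rwa [star_trivial] at this
  rcases le_or_gt β 0 with h | h
  · linarith
  · nlinarith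

lemma det_rank_one_update {A : Matrix (Fin d) (Fin d) ℝ} (hA : A.PosDef) (v : Fin d → ℝ) :
    (A + vecMulVec v v).det = A.det * (1 + v ⬝ᵥ A⁻¹ *ᵥ v) := by
  rw [vecMulVec_eq Unit, Matrix.det_add_replicateCol_mul_replicateRow hA.det_pos.ne'.isUnit]
  congr 1
  rw [det_unique]
  simp only [Matrix.add_apply, Matrix.one_apply_eq, Matrix.mul_apply, Matrix.replicateRow_apply,
    Matrix.replicateCol_apply, dotProduct, mulVec, Finset.sum_mul, Finset.mul_sum]
  congr 1
  refine Finset.sum_congr rfl fun i _ => Finset.sum_congr rfl fun j _ => ?_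
  have h : A⁻¹ j i = A⁻¹ i j := by
    have h := congrFun (congrFun hA.inv.1 j) i
    simpa [conjTranspose_apply] using h.symm
  rw [h]; ring

lemma trace_eq_sum_eigs {A : Matrix (Fin d) (Fin d) ℝ} (hA : A.IsHermitian) :
    A.trace = ∑ i, hA.eigenvalues i := by
  conv_lhs => rw [hA.spectral_theorem, Unitary.conjStarAlgAut_apply]
  rw [Matrix.trace_mul_comm, ← Matrix.mul_assoc]
  have h1 : (star (hA.eigenvectorUnitary : Matrix (Fin d) (Fin d) ℝ)) *
      (hA.eigenvectorUnitary : Matrix (Fin d) (Fin d) ℝ) = 1 := by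
    simpa using congrArg Subtype.val (unitary.star_mul_self hA.eigenvectorUnitary)
  rw [h1, Matrix.one_mul, Matrix.trace_diagonal]
  simp

lemma det_le_trace_pow {A : Matrix (Fin d) (Fin d) ℝ} (hd : 0 < d) (hA : A.PosSemidef) :
    A.det ≤ (A.trace / d) ^ d := by
  have hμ := hA.eigenvalues_nonneg
  have hdet : A.det = ∏ i, hA.1.eigenvalues i := by
    rw [hA.1.det_eq_prod_eigenvalues]; simp
  have htr : A.trace = ∑ i, hA.1.eigenvalues i := trace_eq_sum_eigs hA.1
  rw [hdet, htr]
  have hw : ∑ _i : Fin d, (1 / d : ℝ) = 1 := by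
    simp [Finset.sum_const]
    field_simp
  have hgm := Real.geom_mean_le_arith_mean_weighted Finset.univ (fun _ => (1/d : ℝ))
    hA.1.eigenvalues (fun _ _ => by positivity) hw (fun i _ => hμ i)
  have key : (∏ i, hA.1.eigenvalues i ^ (1/d : ℝ)) ^ (d : ℕ) = ∏ i, hA.1.eigenvalues i := by
    rw [← Finset.prod_pow]
    refine Finset.prod_congr rfl fun i _ => ?_
    rw [← Real.rpow_natCast (hA.1.eigenvalues i ^ (1/d:ℝ)), ← Real.rpow_mul (hμ i)]
    rw [one_div, inv_mul_cancel₀ (by exact_mod_cast hd.ne'), Real.rpow_one]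
  calc ∏ i, hA.1.eigenvalues i = (∏ i, hA.1.eigenvalues i ^ (1/d : ℝ)) ^ (d:ℕ) := key.symm
    _ ≤ (∑ i, (1/d : ℝ) * hA.1.eigenvalues i) ^ (d:ℕ) := by
        apply pow_le_pow_left₀ (Finset.prod_nonneg fun i _ => Real.rpow_nonneg (hμ i) _) hgm
    _ = ((∑ i, hA.1.eigenvalues i) / d) ^ (d:ℕ) := by
        rw [← Finset.mul_sum]; ring_nf

lemma M_sub_psd (x : ℕ → Fin d → ℝ) (lam : ℝ) {S S' : Finset ℕ} (h : S ⊆ S') :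
    ((lam • (1 : Matrix (Fin d) (Fin d) ℝ) + ∑ s ∈ S', vecMulVec (x s) (x s))
      - (lam • (1 : Matrix (Fin d) (Fin d) ℝ) + ∑ s ∈ S, vecMulVec (x s) (x s))).PosSemidef := by
  have he : (lam • (1 : Matrix (Fin d) (Fin d) ℝ) + ∑ s ∈ S', vecMulVec (x s) (x s))
      - (lam • (1 : Matrix (Fin d) (Fin d) ℝ) + ∑ s ∈ S, vecMulVec (x s) (x s))
      = ∑ s ∈ S' \ S, vecMulVec (x s) (x s) := by
    rw [← Finset.sum_sdiff h]
    abel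
  rw [he]
  exact Finset.sum_induction _ _ (fun _ _ h h' => h.add h') (Matrix.PosSemidef.zero)
    (fun s _ => psd_vecMulVec (x s))

lemma det_lower_aux (x : ℕ → Fin d → ℝ) (lam : ℝ) (hlam : 0 < lam) (H : Finset ℕ)
    (hyp : ∀ t ∈ H, ∀ S : Finset ℕ, S ⊆ H → (∀ s ∈ S, s < t) →
      1 < x t ⬝ᵥ (lam • (1 : Matrix (Fin d) (Fin d) ℝ) + ∑ s ∈ S, vecMulVec (x s) (x s))⁻¹ *ᵥ x t) :
    2 ^ H.card * lam ^ d
      ≤ (lam • (1 : Matrix (Fin d) (Fin d) ℝ) + ∑ s ∈ H, vecMulVec (x s) (x s)).det := by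
  have main : ∀ S : Finset ℕ, S ⊆ H → 2 ^ S.card * lam ^ d
      ≤ (lam • (1 : Matrix (Fin d) (Fin d) ℝ) + ∑ s ∈ S, vecMulVec (x s) (x s)).det := by
    intro S
    induction S using Finset.strongInduction with
    | _ S ih =>
      intro hSH
      rcases S.eq_empty_or_nonempty with rfl | hne
      · simp only [Finset.card_empty, pow_zero, one_mul, Finset.sum_empty, add_zero]
        rw [Matrix.det_smul, Matrix.det_one, mul_one]
        simp
      · set t := S.max' hne with ht
        have htS : t ∈ S := S.max'_mem hne
        set S' := S.erase t with hS'
        have hss : S' ⊂ S := Finset.erase_ssubset htS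
        have hS'H : S' ⊆ H := (Finset.erase_subset _ _).trans hSH
        have ih' := ih S' hss hS'H
        have hsum : ∑ s ∈ S, vecMulVec (x s) (x s)
            = (∑ s ∈ S', vecMulVec (x s) (x s)) + vecMulVec (x t) (x t) := by
          rw [hS', Finset.sum_erase_add _ _ htS]
        have hposd := posDef_M hlam x (d := d) S'
        have hdet := det_rank_one_update hposd (x t)
        have hq : 1 < x t ⬝ᵥ (lam • (1 : Matrix (Fin d) (Fin d) ℝ)
            + ∑ s ∈ S', vecMulVec (x s) (x s))⁻¹ *ᵥ x t := by
          refine hyp t (hSH htS) S' hS'H fun s hs => ?_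
          have hle := S.le_max' s (Finset.mem_of_mem_erase hs)
          have hne' := Finset.ne_of_mem_erase hs
          omega
        have hcard : S.card = S'.card + 1 := by
          rw [hS', Finset.card_erase_of_mem htS]
          have := Finset.card_pos.mpr hne
          omega
        calc 2 ^ S.card * lam ^ d = 2 * (2 ^ S'.card * lam ^ d) := by
              rw [hcard]; ring
          _ ≤ 2 * (lam • (1 : Matrix (Fin d) (Fin d) ℝ)
              + ∑ s ∈ S', vecMulVec (x s) (x s)).det := by linarith
          _ ≤ (lam • (1 : Matrix (Fin d) (Fin d) ℝ)
              + ∑ s ∈ S', vecMulVec (x s) (x s)).det * (1 + x t ⬝ᵥ (lam • (1 : Matrix (Fin d) (Fin d) ℝ)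
              + ∑ s ∈ S', vecMulVec (x s) (x s))⁻¹ *ᵥ x t) := by
              have hd0 := hposd.det_pos
              nlinarith
          _ = (lam • (1 : Matrix (Fin d) (Fin d) ℝ) + ∑ s ∈ S, vecMulVec (x s) (x s)).det := by
              rw [hsum, ← add_assoc, hdet]
  exact main H (subset_refl H)


/-- Implicit intermediate bound on the elliptical potential count. -/
theorem elliptical_potential_count_implicit (d T : ℕ) (hd : 1 ≤ d) (hT : 1 ≤ T)
    (x : ℕ → Fin d → ℝ)
    (hx : ∀ t ∈ Finset.Icc 1 T, Real.sqrt (∑ i, (x t i) ^ 2) ≤ 1)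
    (lam : ℝ) (hlam : 0 < lam)
    (V : ℕ → Matrix (Fin d) (Fin d) ℝ)
    (hV : ∀ k, V k = lam • (1 : Matrix (Fin d) (Fin d) ℝ)
        + ∑ s ∈ Finset.Icc 1 k, Matrix.vecMulVec (x s) (x s))
    (H : Finset ℕ)
    (hH : ∀ t, t ∈ H ↔ t ∈ Finset.Icc 1 T ∧ 1 < x t ⬝ᵥ (V (t - 1))⁻¹ *ᵥ x t) :
    (H.card : ℝ) ≤ (d / Real.log 2) * Real.log (1 + H.card / (lam * d)) := by
  set m : ℕ := H.card with hm
  have hd0 : (0:ℝ) < d := by exact_mod_cast hd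
  -- step 1: hypothesis for the determinant lower bound
  have hyp : ∀ t ∈ H, ∀ S : Finset ℕ, S ⊆ H → (∀ s ∈ S, s < t) →
      1 < x t ⬝ᵥ (lam • (1 : Matrix (Fin d) (Fin d) ℝ)
        + ∑ s ∈ S, vecMulVec (x s) (x s))⁻¹ *ᵥ x t := by
    intro t htH S hSH hlt
    obtain ⟨htI, hq⟩ := (hH t).mp htH
    rw [hV (t-1)] at hq
    have hsub : S ⊆ Finset.Icc 1 (t-1) := by
      intro s hs
      have hsH := hSH hs
      have hsI := ((hH s).mp hsH).1
      rw [Finset.mem_Icc] at hsI ⊢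
      have := hlt s hs
      omega
    have hmono := inv_dot_antitone (posDef_M hlam x S) (posDef_M hlam x (Finset.Icc 1 (t-1)))
      (M_sub_psd x lam hsub) (x t)
    linarith
  have hlow := det_lower_aux x lam hlam H hyp
  -- step 2: upper bound via trace
  have hposH := posDef_M hlam x (d := d) H
  have htrace : (lam • (1 : Matrix (Fin d) (Fin d) ℝ)
      + ∑ s ∈ H, vecMulVec (x s) (x s)).trace ≤ lam * d + m := by
    rw [Matrix.trace_add, Matrix.trace_smul, Matrix.trace_one, Matrix.trace_sum]
    have hbd : ∀ s ∈ H, (vecMulVec (x s) (x s)).trace ≤ 1 := by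
      intro s hsH
      have hsI := ((hH s).mp hsH).1
      have hx1 := hx s hsI
      have hnn : (0:ℝ) ≤ ∑ i, (x s i)^2 := by positivity
      have hsq : (∑ i, (x s i)^2) ≤ 1 := by
        nlinarith [Real.sq_sqrt hnn, Real.sqrt_nonneg (∑ i, (x s i)^2)]
      calc (vecMulVec (x s) (x s)).trace = ∑ i, (x s i)^2 := by
            simp [Matrix.trace, Matrix.diag, vecMulVec_apply, sq]
        _ ≤ 1 := hsq
    have := Finset.sum_le_card_nsmul H _ 1 hbd
    simp only [smul_eq_mul, nsmul_eq_mul, mul_one] at this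
    have : ∑ s ∈ H, (vecMulVec (x s) (x s)).trace ≤ (m:ℝ) := by exact_mod_cast this
    simp only [smul_eq_mul, Fintype.card_fin]
    linarith
  have htr_nn : (0:ℝ) ≤ (lam • (1 : Matrix (Fin d) (Fin d) ℝ)
      + ∑ s ∈ H, vecMulVec (x s) (x s)).trace / d := by
    rw [Matrix.trace_add, Matrix.trace_smul, Matrix.trace_one, Matrix.trace_sum]
    have : (0:ℝ) ≤ ∑ s ∈ H, (vecMulVec (x s) (x s)).trace := by
      refine Finset.sum_nonneg fun s _ => ?_
      simp only [Matrix.trace, Matrix.diag, vecMulVec_apply]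
      exact Finset.sum_nonneg fun i _ => mul_self_nonneg _
    simp only [smul_eq_mul, Fintype.card_fin]
    have hl : (0:ℝ) ≤ lam * d := by positivity
    apply div_nonneg _ hd0.le
    linarith
  have hup := det_le_trace_pow (Nat.pos_of_ne_zero (by omega)) hposH.posSemidef
  have hup2 : (lam • (1 : Matrix (Fin d) (Fin d) ℝ)
      + ∑ s ∈ H, vecMulVec (x s) (x s)).det ≤ ((lam * d + m)/d)^d := by
    refine hup.trans (pow_le_pow_left₀ htr_nn ?_ d)
    gcongr
  -- step 3: combine
  have hfact : ((lam * d + m)/d : ℝ) = lam * (1 + m/(lam*d)) := by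
    field_simp
  have hcomb : (2:ℝ)^m * lam^d ≤ lam^d * (1 + m/(lam*d))^d := by
    calc (2:ℝ)^m * lam^d ≤ _ := hlow
      _ ≤ ((lam * d + m)/d)^d := hup2
      _ = (lam * (1 + m/(lam*d)))^d := by rw [hfact]
      _ = lam^d * (1 + m/(lam*d))^d := mul_pow _ _ _
  have hlam_pow : (0:ℝ) < lam^d := by positivity
  have hmain : (2:ℝ)^m ≤ (1 + m/(lam*d))^d := by
    have := mul_le_mul_of_nonneg_right hcomb (le_of_lt (inv_pos.mpr hlam_pow))
    calc (2:ℝ)^m = 2^m * lam^d * (lam^d)⁻¹ := by field_simp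
      _ ≤ lam^d * (1 + m/(lam*d))^d * (lam^d)⁻¹ := this
      _ = (1 + m/(lam*d))^d := by field_simp
  have hc_nn : (0:ℝ) ≤ m/(lam*d) := by positivity
  have hbase : (0:ℝ) < 1 + m/(lam*d) := by linarith
  have hlog := Real.log_le_log (by positivity) hmain
  rw [Real.log_pow, Real.log_pow] at hlog
  have hlog2 : (0:ℝ) < Real.log 2 := Real.log_pos (by norm_num)
  rw [div_mul_eq_mul_div, le_div_iff₀ hlog2]
  calc (m:ℝ) * Real.log 2 ≤ d * Real.log (1 + m/(lam*d)) := by exact_mod_cast hlog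
    _ = _ := by ring
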